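/- Base case computations: (a) For M₀, M₁ ∈ UC(ω) with fM₀ ≅ fM₁ ≅ M, every tail of M₀ + M₁·ℕ is isomorphic to M + M₁·ℕ; (b) for M₀ ∈ UC(ω) with fM₀ ≅ M, every tail of M₀·ℤ is isomorphic to M + M₀·ℕ. In particular M₀ + M₁·ℕ and M₀·ℤ are uniform chains (of rank ω+1) under these hypotheses. -/

import Mathlib

def inSS (s : List ℕ) : Prop :=
  s ≠ [] ∧ s.headI = 0 ∧ ∀ i, i < s.length → s.getD i 0 ≤ i

def sMinus (s : List ℕ) : List ℕ := s.dropLast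

def sPlus (s : List ℕ) : List ℕ := s.dropLast ++ [s.getLastD 0 + 1]

lemma sPlus_length (s : List ℕ) (h : s ≠ []) : (sPlus s).length = s.length := by
  simp [sPlus]
  exact Nat.succ_pred_eq_of_pos (List.length_pos_iff.mpr h)

lemma sPlus_last (s : List ℕ) : (sPlus s).getLastD 0 = s.getLastD 0 + 1 := by
  simp [sPlus, List.getLastD_concat]

def lf (s : List ℕ) : ℕ :=
  if h1 : s.length ≤ 1 then 1
  else if s.length - 1 ≤ s.getLastD 0 then lf (sMinus s)
  else lf (sPlus s) + lf (sMinus s)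
termination_by (s.length, s.length - s.getLastD 0)
decreasing_by
  all_goals first
    | exact Prod.Lex.left _ _ (by simp [sMinus]; omega)
    | (have h : s ≠ [] := by intro h; subst h; simp at h1
       refine Prod.Lex.right' _ ?_ ?_
       · rw [sPlus_length s h]
       · rw [sPlus_length s h, sPlus_last s]; omega)

def leavesSeq (s : List ℕ) (k : ℕ) : List ℕ :=
  if h1 : s.length ≤ 1 then [k]
  else if s.length - 1 ≤ s.getLastD 0 then leavesSeq (sMinus s) 0
  else leavesSeq (sPlus s) (k + 1) ++ leavesSeq (sMinus s) 0
termination_by (s.length, s.length - s.getLastD 0)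
decreasing_by
  all_goals first
    | exact Prod.Lex.left _ _ (by simp [sMinus]; omega)
    | (have h : s ≠ [] := by intro h; subst h; simp at h1
       refine Prod.Lex.right' _ ?_ ?_
       · rw [sPlus_length s h]
       · rw [sPlus_length s h, sPlus_last s]; omega)

def wt (s : List ℕ) (i : ℕ) : ℕ := (leavesSeq s 0).getD i 0


instance : Inhabited LinOrd.{0} := ⟨LinOrd.of PUnit⟩

/-- All tails (final segments) of `M` are isomorphic to all tails of `N`:
`fM ≅ fN` for uniform chains. -/
def TailsIso (M N : LinOrd.{0}) : Prop :=
  ∀ (x : M) (y : N), Nonempty ({z : M // x ≤ z} ≃o {z : N // y ≤ z})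

/-- A chain is uniform if all of its tails are pairwise order-isomorphic. -/
def IsUniform (M : LinOrd.{0}) : Prop := TailsIso M M

/-- Level-`n` component relation of the rank decomposition:
`compN C 0 = Eq`, and `compN C (n+1) x y` iff finitely many `compN C n`-classes
meet the interval `[x, y]`. -/
def compN (C : LinOrd.{0}) : ℕ → C → C → Prop
  | 0 => Eq
  | n + 1 => fun x y => ∃ F : Finset C, ∀ z, z ∈ Set.uIcc x y → ∃ w ∈ F, compN C n z w

/-- `M` has Hausdorff rank `ω`: any two points are equivalent at some finite level,
but no finite level identifies all points. -/
def HasRankOmega (M : LinOrd.{0}) : Prop :=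
  (∀ x y : M, ∃ n, compN M n x y) ∧ (∀ n, ∃ x y : M, ¬ compN M n x y)

/-- `UC(ω)`: uniform chains of rank `ω`. -/
def UCOmega (M : LinOrd.{0}) : Prop := IsUniform M ∧ HasRankOmega M

/-- The Pastjin chain constructor `A(s)[M₀,…,M_{lf(s)-1}]` (long version):
`A(⟨0⟩)[M₀] = M₀`; `A(s)[M] = A(s⁻)[M]·ℤ` if `s(n) = n`; otherwise
`A(s)[M] = A(s⁺)[M₀,…,M_{lf(s⁺)-1}] + A(s⁻)[M_{lf(s⁺)},…,M_{lf(s)-1}]·ℕ`. -/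
def build (s : List ℕ) (M : List LinOrd.{0}) : LinOrd.{0} :=
  if h1 : s.length ≤ 1 then M.headI
  else if s.length - 1 ≤ s.getLastD 0 then LinOrd.of (ℤ ×ₗ (build (sMinus s) M))
  else LinOrd.of ((build (sPlus s) (M.take (lf (sPlus s)))) ⊕ₗ
        (ℕ ×ₗ (build (sMinus s) (M.drop (lf (sPlus s))))))
termination_by (s.length, s.length - s.getLastD 0)
decreasing_by
  all_goals first
    | exact Prod.Lex.left _ _ (by simp [sMinus]; omega)
    | (have h : s ≠ [] := by intro h; subst h; simp at h1
       refine Prod.Lex.right' _ ?_ ?_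
       · rw [sPlus_length s h]
       · rw [sPlus_length s h, sPlus_last s]; omega)

/-- A tail of `M` (an arbitrary final segment, canonical up to isomorphism for
uniform chains). -/
noncomputable def fTail (M : LinOrd.{0}) : LinOrd.{0} :=
  haveI := Classical.dec (Nonempty M)
  if h : Nonempty M then LinOrd.of {y : M // h.some ≤ y} else M

/-- The tail array `f_s(M)`. -/
noncomputable def tailArr (s : List ℕ) (M : List LinOrd.{0}) : List LinOrd.{0} :=
  if h1 : s.length ≤ 1 then [fTail M.headI]
  else if s = [0, 0] then [fTail M.headI, M.getD 1 default]
  else if s = [0, 1] then [fTail M.headI, M.headI]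
  else if s.length - 1 ≤ s.getLastD 0 then tailArr (sMinus s) M ++ M
  else tailArr (sPlus s) (M.take (lf (sPlus s))) ++ M.drop (lf (sPlus s))
termination_by (s.length, s.length - s.getLastD 0)
decreasing_by
  all_goals first
    | exact Prod.Lex.left _ _ (by simp [sMinus]; omega)
    | (have h : s ≠ [] := by intro h; subst h; simp at h1
       refine Prod.Lex.right' _ ?_ ?_
       · rw [sPlus_length s h]
       · rw [sPlus_length s h, sPlus_last s]; omega)

/-- Componentwise isomorphism of arrays of chains. -/
def ArrIso (A B : List LinOrd.{0}) : Prop :=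
  A.length = B.length ∧
    ∀ i, i < A.length → Nonempty (↥(A.getD i default) ≃o ↥(B.getD i default))


section Helpers
variable {α β γ δ : Type*} [LinearOrder α] [LinearOrder β] [LinearOrder γ] [LinearOrder δ]

def sumMapFun (e1 : α ≃o γ) (e2 : β ≃o δ) : (α ⊕ₗ β) → (γ ⊕ₗ δ)
  | Sum.inl a => toLex (Sum.inl (e1 a))
  | Sum.inr b => toLex (Sum.inr (e2 b))

noncomputable def mySumLexCongr (e1 : α ≃o γ) (e2 : β ≃o δ) : (α ⊕ₗ β) ≃o (γ ⊕ₗ δ) := by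
  refine StrictMono.orderIsoOfSurjective (sumMapFun e1 e2) ?_ ?_
  · rintro (a1 | b1) (a2 | b2) hlt
    · exact Sum.Lex.inl_lt_inl_iff.mpr (e1.strictMono (Sum.Lex.inl_lt_inl_iff.mp hlt))
    · exact Sum.Lex.inl_lt_inr _ _
    · exact absurd hlt Sum.Lex.not_inr_lt_inl
    · exact Sum.Lex.inr_lt_inr_iff.mpr (e2.strictMono (Sum.Lex.inr_lt_inr_iff.mp hlt))
  · rintro (a | b)
    · exact ⟨toLex (Sum.inl (e1.symm a)),
        congrArg (fun g => toLex (Sum.inl g)) (e1.apply_symm_apply a)⟩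
    · exact ⟨toLex (Sum.inr (e2.symm b)),
        congrArg (fun g => toLex (Sum.inr g)) (e2.apply_symm_apply b)⟩

def tslFun (x : α) : {y : α ⊕ₗ β // toLex (Sum.inl x) ≤ y} → ({a : α // x ≤ a} ⊕ₗ β)
  | ⟨Sum.inl a, h⟩ => toLex (Sum.inl ⟨a, Sum.Lex.inl_le_inl_iff.mp h⟩)
  | ⟨Sum.inr b, _⟩ => toLex (Sum.inr b)

noncomputable def tailSumLeft (x : α) :
    {y : α ⊕ₗ β // toLex (Sum.inl x) ≤ y} ≃o ({a : α // x ≤ a} ⊕ₗ β) := by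
  refine StrictMono.orderIsoOfSurjective (tslFun x) ?_ ?_
  · rintro ⟨(a1 | b1), h1⟩ ⟨(a2 | b2), h2⟩ hlt
    · exact Sum.Lex.inl_lt_inl_iff.mpr (Subtype.mk_lt_mk.mpr (Sum.Lex.inl_lt_inl_iff.mp hlt))
    · exact Sum.Lex.inl_lt_inr _ _
    · exact absurd hlt Sum.Lex.not_inr_lt_inl
    · exact Sum.Lex.inr_lt_inr_iff.mpr (Sum.Lex.inr_lt_inr_iff.mp hlt)
  · rintro (⟨a, ha⟩ | b)
    · exact ⟨⟨toLex (Sum.inl a), Sum.Lex.inl_le_inl_iff.mpr ha⟩, rfl⟩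
    · exact ⟨⟨toLex (Sum.inr b), Sum.Lex.inl_le_inr x b⟩, rfl⟩

def tsrFun (x : β) : {y : α ⊕ₗ β // toLex (Sum.inr x) ≤ y} → {b : β // x ≤ b}
  | ⟨Sum.inl _, h⟩ => absurd h Sum.Lex.not_inr_le_inl
  | ⟨Sum.inr b, h⟩ => ⟨b, Sum.Lex.inr_le_inr_iff.mp h⟩

noncomputable def tailSumRight (x : β) :
    {y : α ⊕ₗ β // toLex (Sum.inr x) ≤ y} ≃o {b : β // x ≤ b} := by
  refine StrictMono.orderIsoOfSurjective (tsrFun x) ?_ ?_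
  · rintro ⟨(a1 | b1), h1⟩ ⟨(a2 | b2), h2⟩ hlt
    · exact absurd h1 Sum.Lex.not_inr_le_inl
    · exact absurd h1 Sum.Lex.not_inr_le_inl
    · exact absurd h2 Sum.Lex.not_inr_le_inl
    · exact Subtype.mk_lt_mk.mpr (Sum.Lex.inr_lt_inr_iff.mp hlt)
  · rintro ⟨b, hb⟩
    exact ⟨⟨toLex (Sum.inr b), Sum.Lex.inr_le_inr_iff.mpr hb⟩, rfl⟩

def tlnFun (n : ℕ) (b : β) (y : {y : ℕ ×ₗ β // toLex (n, b) ≤ y}) :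
    ({c : β // b ≤ c} ⊕ₗ (ℕ ×ₗ β)) :=
  if _ : (ofLex y.1).1 = n then
    toLex (Sum.inl ⟨(ofLex y.1).2, by
      rcases (Prod.Lex.toLex_le_toLex (x := (n, b)) (y := ofLex y.1)).mp y.2 with h' | ⟨_, h'⟩
      · omega
      · exact h'⟩)
  else toLex (Sum.inr (toLex ((ofLex y.1).1 - n - 1, (ofLex y.1).2)))

noncomputable def tailLexNat (n : ℕ) (b : β) :
    {y : ℕ ×ₗ β // toLex (n, b) ≤ y} ≃o ({c : β // b ≤ c} ⊕ₗ (ℕ ×ₗ β)) := by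
  refine StrictMono.orderIsoOfSurjective (tlnFun n b) ?_ ?_
  · rintro ⟨y1, h1⟩ ⟨y2, h2⟩ hlt
    have hlt' := (Prod.Lex.toLex_lt_toLex (x := ofLex y1) (y := ofLex y2)).mp hlt
    have h1' := (Prod.Lex.toLex_le_toLex (x := (n, b)) (y := ofLex y1)).mp h1
    have h2' := (Prod.Lex.toLex_le_toLex (x := (n, b)) (y := ofLex y2)).mp h2
    dsimp only at hlt' h1' h2'
    simp only [tlnFun]
    split_ifs with hk1 hk2 hk2
    · refine Sum.Lex.inl_lt_inl_iff.mpr (Subtype.mk_lt_mk.mpr ?_)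
      rcases hlt' with h | ⟨_, h⟩
      · omega
      · exact h
    · exact Sum.Lex.inl_lt_inr _ _
    · exfalso
      rcases h1' with h | ⟨h, _⟩ <;> rcases hlt' with h' | ⟨h', _⟩ <;> omega
    · refine Sum.Lex.inr_lt_inr_iff.mpr (Prod.Lex.toLex_lt_toLex.mpr ?_)
      dsimp only
      rcases h1' with h | ⟨h, _⟩
      · rcases hlt' with h' | ⟨h', hc⟩
        · exact Or.inl (by omega)
        · exact Or.inr ⟨by omega, hc⟩
      · omega
  · rintro (⟨c, hc⟩ | ⟨m, c⟩)
    · refine ⟨⟨toLex (n, c), Prod.Lex.toLex_le_toLex.mpr (Or.inr ⟨rfl, hc⟩)⟩, ?_⟩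
      simp only [tlnFun, ofLex_toLex]
      exact dif_pos rfl
    · refine ⟨⟨toLex (n + 1 + m, c), Prod.Lex.toLex_le_toLex.mpr (Or.inl (by omega))⟩, ?_⟩
      simp only [tlnFun, ofLex_toLex]
      refine (dif_neg (show ¬ (n + 1 + m = n) by omega)).trans ?_
      have hm : n + 1 + m - n - 1 = m := by omega
      rw [hm]; rfl

def tliFun (n : ℤ) (b : β) (y : {y : ℤ ×ₗ β // toLex (n, b) ≤ y}) :
    ({c : β // b ≤ c} ⊕ₗ (ℕ ×ₗ β)) :=
  if _ : (ofLex y.1).1 = n then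
    toLex (Sum.inl ⟨(ofLex y.1).2, by
      rcases (Prod.Lex.toLex_le_toLex (x := (n, b)) (y := ofLex y.1)).mp y.2 with h' | ⟨_, h'⟩
      · omega
      · exact h'⟩)
  else toLex (Sum.inr (toLex (((ofLex y.1).1 - n - 1).toNat, (ofLex y.1).2)))

noncomputable def tailLexInt (n : ℤ) (b : β) :
    {y : ℤ ×ₗ β // toLex (n, b) ≤ y} ≃o ({c : β // b ≤ c} ⊕ₗ (ℕ ×ₗ β)) := by
  refine StrictMono.orderIsoOfSurjective (tliFun n b) ?_ ?_
  · rintro ⟨y1, h1⟩ ⟨y2, h2⟩ hlt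
    have hlt' := (Prod.Lex.toLex_lt_toLex (x := ofLex y1) (y := ofLex y2)).mp hlt
    have h1' := (Prod.Lex.toLex_le_toLex (x := (n, b)) (y := ofLex y1)).mp h1
    have h2' := (Prod.Lex.toLex_le_toLex (x := (n, b)) (y := ofLex y2)).mp h2
    dsimp only at hlt' h1' h2'
    simp only [tliFun]
    split_ifs with hk1 hk2 hk2
    · refine Sum.Lex.inl_lt_inl_iff.mpr (Subtype.mk_lt_mk.mpr ?_)
      rcases hlt' with h | ⟨_, h⟩
      · omega
      · exact h
    · exact Sum.Lex.inl_lt_inr _ _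
    · exfalso
      rcases h1' with h | ⟨h, _⟩ <;> rcases hlt' with h' | ⟨h', _⟩ <;> omega
    · refine Sum.Lex.inr_lt_inr_iff.mpr (Prod.Lex.toLex_lt_toLex.mpr ?_)
      dsimp only
      rcases h1' with h | ⟨h, _⟩
      · rcases h2' with h2'' | ⟨h2'', _⟩
        · rcases hlt' with h' | ⟨h', hc⟩
          · exact Or.inl (by omega)
          · exact Or.inr ⟨by omega, hc⟩
        · omega
      · omega
  · rintro (⟨c, hc⟩ | ⟨m, c⟩)
    · refine ⟨⟨toLex (n, c), Prod.Lex.toLex_le_toLex.mpr (Or.inr ⟨rfl, hc⟩)⟩, ?_⟩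
      simp only [tliFun, ofLex_toLex]
      exact dif_pos rfl
    · refine ⟨⟨toLex (n + 1 + m, c), Prod.Lex.toLex_le_toLex.mpr (Or.inl (by omega))⟩, ?_⟩
      simp only [tliFun, ofLex_toLex]
      refine (dif_neg (show ¬ (n + 1 + (m : ℤ) = n) by omega)).trans ?_
      have hm : (n + 1 + m - n - 1).toNat = m := by omega
      rw [hm]; rfl

end Helpers

/-- base case computations:
(a) for `M₀, M₁ ∈ UC(ω)` with all tails `fM₀ ≅ fM₁ ≅ M`, every tail of `M₀ + M₁·ℕ` is
isomorphic to `M + M₁·ℕ`, and `M₀ + M₁·ℕ` is uniform;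
(b) for `M₀ ∈ UC(ω)` with `fM₀ ≅ M`, every tail of `M₀·ℤ` is isomorphic to
`M + M₀·ℕ`, and `M₀·ℤ` is uniform. -/
theorem base_case_tails :
    (∀ M₀ M₁ M : LinOrd.{0}, UCOmega M₀ → UCOmega M₁ →
      (∀ x : M₀, Nonempty ({y : M₀ // x ≤ y} ≃o M)) →
      (∀ x : M₁, Nonempty ({y : M₁ // x ≤ y} ≃o M)) →
      (∀ x : ↥M₀ ⊕ₗ (ℕ ×ₗ ↥M₁),
        Nonempty ({y : ↥M₀ ⊕ₗ (ℕ ×ₗ ↥M₁) // x ≤ y} ≃o (↥M ⊕ₗ (ℕ ×ₗ ↥M₁)))) ∧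
      IsUniform (LinOrd.of (↥M₀ ⊕ₗ (ℕ ×ₗ ↥M₁)))) ∧
    (∀ M₀ M : LinOrd.{0}, UCOmega M₀ →
      (∀ x : M₀, Nonempty ({y : M₀ // x ≤ y} ≃o M)) →
      (∀ x : ℤ ×ₗ ↥M₀,
        Nonempty ({y : ℤ ×ₗ ↥M₀ // x ≤ y} ≃o (↥M ⊕ₗ (ℕ ×ₗ ↥M₀)))) ∧
      IsUniform (LinOrd.of (ℤ ×ₗ ↥M₀))) := by
  
  constructor
  · intro M₀ M₁ M _ _ h0 h1
    have tails : ∀ x : ↥M₀ ⊕ₗ (ℕ ×ₗ ↥M₁),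
        Nonempty ({y : ↥M₀ ⊕ₗ (ℕ ×ₗ ↥M₁) // x ≤ y} ≃o (↥M ⊕ₗ (ℕ ×ₗ ↥M₁))) := by
      rintro (a | ⟨n, bb⟩)
      · exact ⟨(tailSumLeft a).trans (mySumLexCongr (h0 a).some (OrderIso.refl _))⟩
      · exact ⟨((tailSumRight (toLex (n, bb))).trans (tailLexNat n bb)).trans
          (mySumLexCongr (h1 bb).some (OrderIso.refl _))⟩
    refine ⟨tails, ?_⟩
    intro x y
    obtain ⟨e⟩ := tails x
    obtain ⟨f⟩ := tails y
    exact ⟨e.trans f.symm⟩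
  · intro M₀ M _ h0
    have tails : ∀ x : ℤ ×ₗ ↥M₀,
        Nonempty ({y : ℤ ×ₗ ↥M₀ // x ≤ y} ≃o (↥M ⊕ₗ (ℕ ×ₗ ↥M₀))) := by
      rintro ⟨n, bb⟩
      exact ⟨(tailLexInt n bb).trans (mySumLexCongr (h0 bb).some (OrderIso.refl _))⟩
    refine ⟨tails, ?_⟩
    intro x y
    obtain ⟨e⟩ := tails x
    obtain ⟨f⟩ := tails y
    exact ⟨e.trans f.symm⟩
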